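/- For a rooted graph (G,o) with monomer activity z ∈ ℂ with Re(z) > 0 and nonnegative dimer weights, the root monomer probability M_z(G,o) = z·Z_{G−o}(z)/Z_G(z) satisfies |M_z(G,o)| ≤ |z|/Re(z). -/

import Mathlib

open scoped BigOperators
open MeasureTheory Filter Finset

attribute [local instance] Classical.propDecidable

noncomputable section

variable {V : Type*} [Fintype V] [DecidableEq V]

/-- `D` is a monomer-dimer configuration (matching) within the edge set `E`. -/
def IsMatchingIn (E D : Finset (Sym2 V)) : Prop :=
  D ⊆ E ∧ (∀ e ∈ D, ¬ e.IsDiag) ∧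
    ∀ e ∈ D, ∀ f ∈ D, e ≠ f → ∀ v : V, ¬(v ∈ e ∧ v ∈ f)

/-- All matchings of the edge set `E`. -/
def matchingsIn (E : Finset (Sym2 V)) : Finset (Finset (Sym2 V)) :=
  E.powerset.filter (fun D => IsMatchingIn E D)

/-- `M(D)`: the set of vertices not covered by the matching `D` (the monomers). -/
def uncovered (D : Finset (Sym2 V)) : Finset V :=
  Finset.univ.filter (fun v => ∀ e ∈ D, v ∉ e)

/-- `x_i * x_j` for the edge `e = {i,j}`. -/
def edgeProd (x : V → ℝ) : Sym2 V → ℝ :=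
  Sym2.lift ⟨fun a b => x a * x b, fun a b => mul_comm _ _⟩

/-- The monomer-dimer partition function with dimer activities `w` and monomer
activities `x` on the graph with edge set `E`. -/
def partFun (E : Finset (Sym2 V)) (w : Sym2 V → ℝ) (x : V → ℝ) : ℝ :=
  ∑ D ∈ matchingsIn E, (∏ e ∈ D, w e) * ∏ i ∈ uncovered D, x i

/-- The edge set of the complete graph on `V`. -/
def completeEdges (V : Type*) [Fintype V] [DecidableEq V] : Finset (Sym2 V) :=
  Finset.univ.filter (fun e : Sym2 V => ¬ e.IsDiag)

/-- Matching polynomial of the induced subgraph on the vertex subset `S`, with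
dimer weights `w` and complex monomer variable. -/
def matchPolyS (S : Finset V) (w : Sym2 V → ℝ) : Polynomial ℂ :=
  ∑ D ∈ matchingsIn ((completeEdges V).filter (fun e => ∀ v ∈ e, v ∈ S)),
    Polynomial.C (∏ e ∈ D, (w e : ℂ)) * Polynomial.X ^ (S.card - 2 * D.card)

/-! ### Auxiliary machinery for the proof -/

variable (w : Sym2 V → ℝ) (z : ℂ)

/-- Edges of the complete graph supported inside `S`. -/
def edgesOn (S : Finset V) : Finset (Sym2 V) :=
  (completeEdges V).filter (fun e => ∀ v ∈ e, v ∈ S)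

lemma mem_matchingsIn {E D : Finset (Sym2 V)} :
    D ∈ matchingsIn E ↔ IsMatchingIn E D := by
  unfold matchingsIn
  simp only [Finset.mem_filter, Finset.mem_powerset]
  exact ⟨fun h => h.2, fun h => ⟨h.1, h⟩⟩

lemma mem_edgesOn {S : Finset V} {e : Sym2 V} :
    e ∈ edgesOn S ↔ ¬ e.IsDiag ∧ ∀ v ∈ e, v ∈ S := by
  unfold edgesOn completeEdges
  simp [Finset.mem_filter]

/-- A matching inside `S` covers at most `|S|` vertices. -/
lemma two_mul_card_le {S : Finset V} {D : Finset (Sym2 V)}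
    (hD : D ∈ matchingsIn (edgesOn S)) : 2 * D.card ≤ S.card := by
  obtain ⟨hsub, hdiag, hdisj⟩ := mem_matchingsIn.mp hD
  have hcard2 : ∀ e ∈ D, (Finset.univ.filter (· ∈ e) : Finset V).card = 2 := by
    intro e he
    induction e using Sym2.ind with
    | _ a b =>
      have hab : a ≠ b := by simpa [Sym2.mk_isDiag_iff] using hdiag _ he
      have hfil : (Finset.univ.filter (· ∈ s(a, b)) : Finset V) = {a, b} := by
        ext v; simp [Sym2.mem_iff]
      rw [hfil, Finset.card_insert_of_notMem (by simp [hab]), Finset.card_singleton]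
  have hbu : (D.biUnion (fun e => Finset.univ.filter (· ∈ e))).card
      = ∑ e ∈ D, (Finset.univ.filter (· ∈ e) : Finset V).card := by
    refine Finset.card_biUnion ?_
    intro e he f hf hef
    rw [Function.onFun, Finset.disjoint_left]
    intro v hv hv'
    simp only [Finset.mem_filter] at hv hv'
    exact hdisj e he f hf hef v ⟨hv.2, hv'.2⟩
  calc 2 * D.card = ∑ _e ∈ D, 2 := by rw [Finset.sum_const, smul_eq_mul, mul_comm]
    _ = ∑ e ∈ D, (Finset.univ.filter (· ∈ e) : Finset V).card :=
        Finset.sum_congr rfl fun e he => (hcard2 e he).symm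
    _ = (D.biUnion (fun e => Finset.univ.filter (· ∈ e))).card := hbu.symm
    _ ≤ S.card := by
        refine Finset.card_le_card ?_
        intro v hv
        rw [Finset.mem_biUnion] at hv
        obtain ⟨e, he, hve⟩ := hv
        rw [Finset.mem_filter] at hve
        exact (mem_edgesOn.mp (hsub he)).2 v hve.2

/-- The evaluated matching polynomial, as a finite sum. -/
def Zc (S : Finset V) : ℂ :=
  ∑ D ∈ matchingsIn (edgesOn S), (∏ e ∈ D, (w e : ℂ)) * z ^ (S.card - 2 * D.card)

lemma eval_matchPolyS (S : Finset V) : (matchPolyS S w).eval z = Zc w z S := by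
  unfold matchPolyS Zc edgesOn
  rw [Polynomial.eval_finset_sum]
  simp [Polynomial.eval_prod]

lemma Zc_empty : Zc w z (∅ : Finset V) = 1 := by
  have he : edgesOn (∅ : Finset V) = ∅ := by
    ext e
    simp only [mem_edgesOn, Finset.notMem_empty, iff_false, not_and]
    intro _ h
    induction e using Sym2.ind with
    | _ a b => exact absurd (h a (by simp)) (by simp)
  have hm : matchingsIn (∅ : Finset (Sym2 V)) = {∅} := by
    ext D
    simp only [mem_matchingsIn, IsMatchingIn, Finset.subset_empty, Finset.mem_singleton]
    constructor
    · rintro ⟨rfl, -⟩; rfl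
    · rintro rfl
      exact ⟨rfl, by simp, by simp⟩
  rw [Zc, he, hm]
  simp

/-- The Heilmann–Lieb recursion at the root `o`. -/
lemma Zc_recursion {S : Finset V} {o : V} (ho : o ∈ S) :
    Zc w z S = z * Zc w z (S.erase o)
      + ∑ j ∈ S.erase o, (w s(o, j) : ℂ) * Zc w z ((S.erase o).erase j) := by
  classical
  set f : Finset (Sym2 V) → ℂ :=
    fun D => (∏ e ∈ D, (w e : ℂ)) * z ^ (S.card - 2 * D.card) with hf
  have hsplit : Zc w z S
      = (∑ D ∈ (matchingsIn (edgesOn S)).filter (fun D => ∀ e ∈ D, o ∉ e), f D)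
      + ∑ D ∈ (matchingsIn (edgesOn S)).filter (fun D => ¬ ∀ e ∈ D, o ∉ e), f D :=
    (Finset.sum_filter_add_sum_filter_not _ _ _).symm
  -- Part A: matchings avoiding `o`
  have hA : (matchingsIn (edgesOn S)).filter (fun D => ∀ e ∈ D, o ∉ e)
      = matchingsIn (edgesOn (S.erase o)) := by
    ext D
    simp only [Finset.mem_filter, mem_matchingsIn, IsMatchingIn]
    constructor
    · rintro ⟨⟨hsub, hP⟩, hno⟩
      refine ⟨fun e he => ?_, hP⟩
      obtain ⟨hd, hall⟩ := mem_edgesOn.mp (hsub he)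
      exact mem_edgesOn.mpr ⟨hd, fun v hv => Finset.mem_erase.mpr
        ⟨fun hvo => hno e he (hvo ▸ hv), hall v hv⟩⟩
    · rintro ⟨hsub, hP⟩
      refine ⟨⟨fun e he => ?_, hP⟩, fun e he hoe => ?_⟩
      · obtain ⟨hd, hall⟩ := mem_edgesOn.mp (hsub he)
        exact mem_edgesOn.mpr ⟨hd, fun v hv => Finset.mem_of_mem_erase (hall v hv)⟩
      · exact absurd ((mem_edgesOn.mp (hsub he)).2 o hoe) (by simp)
  have hAsum : (∑ D ∈ (matchingsIn (edgesOn S)).filter (fun D => ∀ e ∈ D, o ∉ e), f D)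
      = z * Zc w z (S.erase o) := by
    rw [hA, Zc, Finset.mul_sum]
    refine Finset.sum_congr rfl fun D hD => ?_
    have hle : 2 * D.card ≤ (S.erase o).card := two_mul_card_le hD
    have hc : (S.erase o).card + 1 = S.card := Finset.card_erase_add_one ho
    have hexp : S.card - 2 * D.card = ((S.erase o).card - 2 * D.card) + 1 := by omega
    rw [hf]
    simp only
    rw [hexp, pow_succ]
    ring
  -- Part B: matchings covering `o`
  have hB : (matchingsIn (edgesOn S)).filter (fun D => ¬ ∀ e ∈ D, o ∉ e)
      = (S.erase o).biUnion (fun j =>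
          (matchingsIn (edgesOn ((S.erase o).erase j))).image (insert s(o, j))) := by
    ext D
    simp only [Finset.mem_filter, Finset.mem_biUnion, Finset.mem_image, mem_matchingsIn]
    constructor
    · rintro ⟨⟨hsub, hdiag, hdisj⟩, hno⟩
      push_neg at hno
      obtain ⟨e, he, hoe⟩ := hno
      obtain ⟨j, rfl⟩ := Sym2.mem_iff_exists.mp hoe
      have hoj : o ≠ j := by
        intro h; exact hdiag _ he (by simp [Sym2.mk_isDiag_iff, ← h])
      have hall := (mem_edgesOn.mp (hsub he)).2
      have hjS : j ∈ (S.erase o) := Finset.mem_erase.mpr ⟨(Ne.symm hoj), hall j (by simp)⟩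
      refine ⟨j, hjS, D.erase s(o, j), ⟨⟨fun g hg => ?_, fun g hg => hdiag g (Finset.mem_of_mem_erase hg),
        fun g hg g' hg' => hdisj g (Finset.mem_of_mem_erase hg) g' (Finset.mem_of_mem_erase hg')⟩,
        Finset.insert_erase he⟩⟩
      · have hgD : g ∈ D := Finset.mem_of_mem_erase hg
        have hgne : g ≠ s(o, j) := Finset.ne_of_mem_erase hg
        obtain ⟨hd, hgall⟩ := mem_edgesOn.mp (hsub hgD)
        refine mem_edgesOn.mpr ⟨hd, fun v hv => ?_⟩
        have hvS : v ∈ S := hgall v hv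
        have hvo : v ≠ o := fun h =>
          hdisj g hgD _ he hgne v ⟨hv, by simp [h]⟩
        have hvj : v ≠ j := fun h =>
          hdisj g hgD _ he hgne v ⟨hv, by simp [h]⟩
        exact Finset.mem_erase.mpr ⟨hvj, Finset.mem_erase.mpr ⟨hvo, hvS⟩⟩
    · rintro ⟨j, hj, D', ⟨hsub, hdiag, hdisj⟩, rfl⟩
      obtain ⟨hjo, hjS⟩ := Finset.mem_erase.mp hj
      have hoj : o ≠ j := Ne.symm hjo
      have hD'no : ∀ g ∈ D', ∀ v ∈ g, v ≠ o ∧ v ≠ j := by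
        intro g hg v hv
        have := (mem_edgesOn.mp (hsub hg)).2 v hv
        rw [Finset.mem_erase, Finset.mem_erase] at this
        exact ⟨this.2.1, this.1⟩
      have hojD' : s(o, j) ∉ D' := fun h => (hD'no _ h o (by simp)).1 rfl
      refine ⟨⟨fun g hg => ?_, fun g hg => ?_, ?_⟩, ?_⟩
      · rcases Finset.mem_insert.mp hg with rfl | hg'
        · exact mem_edgesOn.mpr ⟨by simp [Sym2.mk_isDiag_iff, hoj], fun v hv => by
            rcases Sym2.mem_iff.mp hv with rfl | rfl
            exacts [ho, hjS]⟩
        · obtain ⟨hd, hall⟩ := mem_edgesOn.mp (hsub hg')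
          exact mem_edgesOn.mpr ⟨hd, fun v hv =>
            Finset.mem_of_mem_erase (Finset.mem_of_mem_erase (hall v hv))⟩
      · rcases Finset.mem_insert.mp hg with rfl | hg'
        · simp [Sym2.mk_isDiag_iff, hoj]
        · exact hdiag g hg'
      · intro g hg g' hg' hne v hv
        rcases Finset.mem_insert.mp hg with rfl | hg1 <;>
          rcases Finset.mem_insert.mp hg' with rfl | hg2
        · exact hne rfl
        · rcases Sym2.mem_iff.mp hv.1 with rfl | rfl
          · exact (hD'no _ hg2 v hv.2).1 rfl
          · exact (hD'no _ hg2 v hv.2).2 rfl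
        · rcases Sym2.mem_iff.mp hv.2 with rfl | rfl
          · exact (hD'no _ hg1 v hv.1).1 rfl
          · exact (hD'no _ hg1 v hv.1).2 rfl
        · exact hdisj g hg1 g' hg2 hne v hv
      · intro hno
        exact (hno s(o, j) (Finset.mem_insert_self _ _)) (by simp)
  have hdisjB : ∀ j1 ∈ S.erase o, ∀ j2 ∈ S.erase o, j1 ≠ j2 →
      Disjoint ((matchingsIn (edgesOn ((S.erase o).erase j1))).image (insert s(o, j1)))
        ((matchingsIn (edgesOn ((S.erase o).erase j2))).image (insert s(o, j2))) := by
    intro j1 hj1 j2 hj2 hne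
    rw [Finset.disjoint_left]
    rintro D hD1 hD2
    rw [Finset.mem_image] at hD1 hD2
    obtain ⟨D1, hD1m, rfl⟩ := hD1
    obtain ⟨D2, hD2m, hDeq⟩ := hD2
    have h1 : s(o, j2) ∈ insert s(o, j1) D1 := hDeq ▸ Finset.mem_insert_self _ _
    rcases Finset.mem_insert.mp h1 with h | h
    · have := Sym2.eq_iff.mp h.symm
      have hj1o : j1 ≠ o := (Finset.mem_erase.mp hj1).1
      have hj2o : j2 ≠ o := (Finset.mem_erase.mp hj2).1
      rcases this with ⟨-, h2⟩ | ⟨h2, h3⟩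
      · exact hne h2
      · exact hj1o h3
    · have := (mem_edgesOn.mp ((mem_matchingsIn.mp hD1m).1 h)).2 o (by simp)
      rw [Finset.mem_erase, Finset.mem_erase] at this
      exact absurd this.2.1 (by simp)
  have hBsum : (∑ D ∈ (matchingsIn (edgesOn S)).filter (fun D => ¬ ∀ e ∈ D, o ∉ e), f D)
      = ∑ j ∈ S.erase o, (w s(o, j) : ℂ) * Zc w z ((S.erase o).erase j) := by
    rw [hB, Finset.sum_biUnion]
    · refine Finset.sum_congr rfl fun j hj => ?_
      obtain ⟨hjo, hjS⟩ := Finset.mem_erase.mp hj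
      rw [Finset.sum_image ?inj]
      case inj =>
        intro D1 h1 D2 h2 heq
        have hno1 : s(o, j) ∉ D1 := by
          intro h
          have := (mem_edgesOn.mp ((mem_matchingsIn.mp h1).1 h)).2 o (by simp)
          rw [Finset.mem_erase, Finset.mem_erase] at this
          exact absurd this.2.1 (by simp)
        have hno2 : s(o, j) ∉ D2 := by
          intro h
          have := (mem_edgesOn.mp ((mem_matchingsIn.mp h2).1 h)).2 o (by simp)
          rw [Finset.mem_erase, Finset.mem_erase] at this
          exact absurd this.2.1 (by simp)
        rw [← Finset.erase_insert hno1, ← Finset.erase_insert hno2, heq]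
      rw [Zc, Finset.mul_sum]
      refine Finset.sum_congr rfl fun D hD => ?_
      have hno : s(o, j) ∉ D := by
        intro h
        have := (mem_edgesOn.mp ((mem_matchingsIn.mp hD).1 h)).2 o (by simp)
        rw [Finset.mem_erase, Finset.mem_erase] at this
        exact absurd this.2.1 (by simp)
      have hc1 : ((S.erase o).erase j).card + 1 = (S.erase o).card :=
        Finset.card_erase_add_one hj
      have hc2 : (S.erase o).card + 1 = S.card := Finset.card_erase_add_one ho
      have hcard : (insert s(o, j) D).card = D.card + 1 := Finset.card_insert_of_notMem hno
      have hexp : S.card - 2 * (D.card + 1) = ((S.erase o).erase j).card - 2 * D.card := by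
        omega
      rw [hf]
      simp only
      rw [hcard, hexp, Finset.prod_insert hno]
      ring
    · intro j1 hj1 j2 hj2 hne
      exact hdisjB j1 (Finset.mem_coe.mp hj1) j2 (Finset.mem_coe.mp hj2) hne
  rw [hsplit, hAsum, hBsum]


/-- Key induction: nonvanishing plus the half-plane bound on the ratio. -/
lemma Zc_key (hw : ∀ e ∈ completeEdges V, 0 ≤ w e) (hz : 0 < z.re) (S : Finset V) :
    Zc w z S ≠ 0 ∧ ∀ o ∈ S, z.re ≤ (Zc w z S / Zc w z (S.erase o)).re := by
  induction S using Finset.strongInduction with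
  | _ S ih =>
    have hre : ∀ o ∈ S, z.re ≤ (Zc w z S / Zc w z (S.erase o)).re := by
      intro o ho
      have hS'ss : S.erase o ⊂ S := Finset.erase_ssubset ho
      obtain ⟨hS'ne, hS're⟩ := ih _ hS'ss
      have hsum0 : 0 ≤ (∑ j ∈ S.erase o,
          ((w s(o, j) : ℂ) * (Zc w z ((S.erase o).erase j) / Zc w z (S.erase o)))).re := by
        rw [Complex.re_sum]
        refine Finset.sum_nonneg fun j hj => ?_
        obtain ⟨hjo, hjS⟩ := Finset.mem_erase.mp hj
        have hS''ss : (S.erase o).erase j ⊂ S :=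
          Finset.ssubset_of_subset_of_ssubset (Finset.erase_subset _ _) hS'ss
        have hS''ne : Zc w z ((S.erase o).erase j) ≠ 0 := (ih _ hS''ss).1
        have hq : z.re ≤ (Zc w z (S.erase o) / Zc w z ((S.erase o).erase j)).re := hS're j hj
        have hw0 : 0 ≤ w s(o, j) := by
          refine hw _ (Finset.mem_filter.mpr ⟨Finset.mem_univ _, ?_⟩)
          simpa [Sym2.mk_isDiag_iff] using Ne.symm hjo
        rw [Complex.re_ofReal_mul]
        refine mul_nonneg hw0 ?_
        have hinv : Zc w z ((S.erase o).erase j) / Zc w z (S.erase o)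
            = (Zc w z (S.erase o) / Zc w z ((S.erase o).erase j))⁻¹ := by rw [inv_div]
        rw [hinv, Complex.inv_re]
        exact div_nonneg (by linarith) (Complex.normSq_nonneg _)
      have hrec := Zc_recursion w z ho
      rw [hrec, add_div, mul_div_assoc, div_self hS'ne, mul_one, Finset.sum_div,
        Complex.add_re]
      simp_rw [mul_div_assoc]
      linarith
    refine ⟨?_, hre⟩
    rcases S.eq_empty_or_nonempty with rfl | ⟨o, ho⟩
    · rw [Zc_empty]; exact one_ne_zero
    · intro h0
      have hb := hre o ho
      rw [h0, zero_div] at hb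
      simp only [Complex.zero_re] at hb
      linarith

/-- the root monomer probability
`M_z(G,o) = z Z_{G−o}(z)/Z_G(z)` satisfies `|M_z(G,o)| ≤ |z|/Re(z)` for
`Re(z) > 0` and nonnegative dimer weights. -/
theorem root_monomer_probability_bound (w : Sym2 V → ℝ)
    (hw : ∀ e ∈ completeEdges V, 0 ≤ w e) (o : V) (z : ℂ) (hz : 0 < z.re) :
    ‖(z * (matchPolyS (Finset.univ.erase o) w).eval z
        / (matchPolyS Finset.univ w).eval z)‖
      ≤ ‖z‖ / z.re := by
  obtain ⟨ha, hre⟩ := Zc_key w z hw hz Finset.univ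
  have hb := (Zc_key w z hw hz (Finset.univ.erase o)).1
  have hq := hre o (Finset.mem_univ o)
  rw [eval_matchPolyS, eval_matchPolyS]
  set a := Zc w z Finset.univ with hadef
  set b := Zc w z (Finset.univ.erase o) with hbdef
  set q := a / b with hqdef
  have hq0 : 0 < q.re := lt_of_lt_of_le hz hq
  have hrw : z * b / a = z / q := (div_div_eq_mul_div z a b).symm
  rw [hrw, norm_div]
  have habs : q.re ≤ ‖q‖ := Complex.re_le_norm q
  calc ‖z‖ / ‖q‖ ≤ ‖z‖ / q.re :=
        div_le_div_of_nonneg_left (norm_nonneg z) hq0 habs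
    _ ≤ ‖z‖ / z.re :=
        div_le_div_of_nonneg_left (norm_nonneg z) hz hq
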